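/- Let A, B, C be finite dimensional algebras over a field k, let M be a finite dimensional A-B-bimodule and N a finite dimensional B-C-bimodule. Then M* ⊠_{B*} N* ≅ (M ⊗_B N)* as A*-C*-bicomodules, where ⊠_{B*} denotes the cotensor product over the dual coalgebra B*, and the isomorphism sends f ⊗_k g ∈ M* ⊠_{B*} N* to the functional f ⊗_{B*} g on M ⊗_B N. -/

import Mathlib

set_option maxHeartbeats 1000000
set_option synthInstance.maxHeartbeats 400000
set_option linter.unusedSectionVars false


/-!
STATEMENT 6.  Let `A`, `B`, `C` be finite dimensional algebras over a field `k`,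
`M` a finite dimensional `A`-`B`-bimodule and `N` a finite dimensional
`B`-`C`-bimodule.  Then `M* ⊠_{B*} N* ≅ (M ⊗_B N)*` as `A*`-`C*`-bicomodules, the
isomorphism sending `f ⊗ g` to the functional `f ⊗_{B*} g` on `M ⊗_B N`.

Here `M ⊗_B N` is the balanced tensor product ((M ⊗[k] N) modulo `m·b ⊗ n - m ⊗ b·n`),
and the cotensor product `M* ⊠_{B*} N*` is the kernel of
`(δ⁺_{M*} ⊗ id) - (id ⊗ δ⁻_{N*}) : M* ⊗ N* → M* ⊗ B* ⊗ N*`, where `δ⁺_{M*}`, `δ⁻_{N*}`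
are the comodule structures dual to the `B`-actions.  The bicomodule-morphism property
is expressed by duality against the `A`- and `C`-actions.
-/

open TensorProduct MulOpposite

noncomputable section

namespace LQTPaper

variable (k : Type*) [Field k]

def act (H M : Type*) [Ring H] [Algebra k H] [AddCommGroup M] [Module k M]
    [Module H M] [IsScalarTower k H M] : H →ₗ[k] M →ₗ[k] M :=
  (Algebra.lsmul k k M : H →ₐ[k] Module.End k M).toLinearMap

variable {A B C : Type*} [Ring A] [Algebra k A] [FiniteDimensional k A]
  [Ring B] [Algebra k B] [FiniteDimensional k B]
  [Ring C] [Algebra k C] [FiniteDimensional k C]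

variable {M : Type*} [AddCommGroup M] [Module k M] [FiniteDimensional k M]
  [Module A M] [IsScalarTower k A M] [Module Bᵐᵒᵖ M] [IsScalarTower k Bᵐᵒᵖ M]
  [SMulCommClass A Bᵐᵒᵖ M]

variable {N : Type*} [AddCommGroup N] [Module k N] [FiniteDimensional k N]
  [Module B N] [IsScalarTower k B N] [Module Cᵐᵒᵖ N] [IsScalarTower k Cᵐᵒᵖ N]
  [SMulCommClass B Cᵐᵒᵖ N]

/-- The right `B`-action on `M`, as a map `M ⊗ B → M`. -/
def rAct : M ⊗[k] B →ₗ[k] M :=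
  (TensorProduct.lift (act k Bᵐᵒᵖ M)).comp
    ((TensorProduct.comm k M Bᵐᵒᵖ).toLinearMap.comp
      (TensorProduct.map LinearMap.id (opLinearEquiv k).toLinearMap))

/-- The left `B`-action on `N`, as a map `B ⊗ N → N`. -/
def lAct : B ⊗[k] N →ₗ[k] N := TensorProduct.lift (act k B N)

/-- The right `B*`-comodule structure on `M*`, dual to the right `B`-action on `M`. -/
def coactR : Module.Dual k M →ₗ[k] Module.Dual k M ⊗[k] Module.Dual k B :=
  (TensorProduct.dualDistribEquiv k M B).symm.toLinearMap.comp (rAct k).dualMap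

/-- The left `B*`-comodule structure on `N*`, dual to the left `B`-action on `N`. -/
def coactL : Module.Dual k N →ₗ[k] Module.Dual k B ⊗[k] Module.Dual k N :=
  (TensorProduct.dualDistribEquiv k B N).symm.toLinearMap.comp (lAct k).dualMap

/-- `δ⁺ ⊗ id`, reassociated. -/
def cotensorMapL : (Module.Dual k M ⊗[k] Module.Dual k N) →ₗ[k]
    (Module.Dual k M ⊗[k] (Module.Dual k B ⊗[k] Module.Dual k N)) :=
  ((TensorProduct.assoc k (Module.Dual k M) (Module.Dual k B)
      (Module.Dual k N)).toLinearMap.comp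
    (TensorProduct.map (coactR k (B := B) (M := M)) (LinearMap.id (M := Module.Dual k N))))

/-- `id ⊗ δ⁻`. -/
def cotensorMapR : (Module.Dual k M ⊗[k] Module.Dual k N) →ₗ[k]
    (Module.Dual k M ⊗[k] (Module.Dual k B ⊗[k] Module.Dual k N)) :=
  TensorProduct.map (LinearMap.id (M := Module.Dual k M)) (coactL k (B := B) (N := N))

/-- The cotensor product `M* ⊠_{B*} N*`:  the kernel of `δ⁺⊗id - id⊗δ⁻`, i.e. the
equalizer of `δ⁺⊗id` and `id⊗δ⁻`. -/
def cotensor : Submodule k (Module.Dual k M ⊗[k] Module.Dual k N) :=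
  LinearMap.eqLocus (cotensorMapL k (B := B) (M := M) (N := N))
    (cotensorMapR k (B := B) (M := M) (N := N))

/-- The submodule of `M ⊗[k] N` spanned by the balancing relations `m·b ⊗ n - m ⊗ b·n`. -/
def midRel : Submodule k (M ⊗[k] N) :=
  Submodule.span k
    {z : M ⊗[k] N | ∃ (b : B) (m : M) (n : N), z = (op b • m) ⊗ₜ[k] n - m ⊗ₜ[k] (b • n)}

/-- The balanced tensor product `M ⊗_B N`. -/
def tensorOver := (M ⊗[k] N) ⧸ (midRel k (B := B) (M := M) (N := N))

instance : AddCommGroup (tensorOver k (B := B) (M := M) (N := N)) :=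
  inferInstanceAs (AddCommGroup ((M ⊗[k] N) ⧸ (midRel k (B := B) (M := M) (N := N))))
instance : Module k (tensorOver k (B := B) (M := M) (N := N)) :=
  inferInstanceAs (Module k ((M ⊗[k] N) ⧸ (midRel k (B := B) (M := M) (N := N))))

/-! ### Auxiliary lemmas -/

lemma act_apply (H X : Type*) [Ring H] [Algebra k H] [AddCommGroup X] [Module k X]
    [Module H X] [IsScalarTower k H X] (h : H) (x : X) : act k H X h x = h • x := rfl

lemma rAct_tmul (m : M) (b : B) : rAct k (m ⊗ₜ[k] b) = op b • m := by
  simp [rAct, act_apply]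

lemma lAct_tmul (b : B) (n : N) : lAct k (b ⊗ₜ[k] n) = b • n := rfl

lemma dualDistrib_eq_equiv (X Y : Type*) [AddCommGroup X] [Module k X] [FiniteDimensional k X]
    [AddCommGroup Y] [Module k Y] [FiniteDimensional k Y] :
    ⇑(TensorProduct.dualDistrib k X Y) = ⇑(TensorProduct.dualDistribEquiv k X Y) := rfl

lemma dualDistrib_inj (X Y : Type*) [AddCommGroup X] [Module k X] [FiniteDimensional k X]
    [AddCommGroup Y] [Module k Y] [FiniteDimensional k Y] :
    Function.Injective (TensorProduct.dualDistrib k X Y) := by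
  rw [dualDistrib_eq_equiv]
  exact (TensorProduct.dualDistribEquiv k X Y).injective

lemma dualDistrib_symm_apply (X Y : Type*) [AddCommGroup X] [Module k X] [FiniteDimensional k X]
    [AddCommGroup Y] [Module k Y] [FiniteDimensional k Y] (F : Module.Dual k (X ⊗[k] Y)) :
    TensorProduct.dualDistrib k X Y ((TensorProduct.dualDistribEquiv k X Y).symm F) = F := by
  rw [show TensorProduct.dualDistrib k X Y ((TensorProduct.dualDistribEquiv k X Y).symm F)
      = TensorProduct.dualDistribEquiv k X Y ((TensorProduct.dualDistribEquiv k X Y).symm F)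
    from rfl]
  exact (TensorProduct.dualDistribEquiv k X Y).apply_symm_apply F

lemma dualDistrib_coactR (f : Module.Dual k M) (m : M) (b : B) :
    TensorProduct.dualDistrib k M B (coactR k (M := M) (B := B) f) (m ⊗ₜ[k] b)
      = f (op b • m) := by
  have : TensorProduct.dualDistrib k M B (coactR k (M := M) (B := B) f)
      = (rAct k (M := M) (B := B)).dualMap f := dualDistrib_symm_apply k M B _
  rw [this]
  simp [LinearMap.dualMap_apply, rAct_tmul]

lemma dualDistrib_coactL (g : Module.Dual k N) (b : B) (n : N) :
    TensorProduct.dualDistrib k B N (coactL k (N := N) (B := B) g) (b ⊗ₜ[k] n)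
      = g (b • n) := by
  have : TensorProduct.dualDistrib k B N (coactL k (N := N) (B := B) g)
      = (lAct k (N := N) (B := B)).dualMap g := dualDistrib_symm_apply k B N _
  rw [this]
  simp [LinearMap.dualMap_apply, lAct_tmul]

/-- The "big evaluation" map `E : M* ⊗ (B* ⊗ N*) → (M ⊗ (B ⊗ N))*`. -/
def bigE : (Module.Dual k M ⊗[k] (Module.Dual k B ⊗[k] Module.Dual k N)) →ₗ[k]
    Module.Dual k (M ⊗[k] (B ⊗[k] N)) :=
  (TensorProduct.dualDistrib k M (B ⊗[k] N)).comp
    (TensorProduct.map LinearMap.id (TensorProduct.dualDistrib k B N))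

lemma bigE_inj : Function.Injective (bigE k (B := B) (M := M) (N := N)) := by
  have h1 : Function.Injective
      (TensorProduct.map (LinearMap.id (M := Module.Dual k M))
        (TensorProduct.dualDistrib k B N)) :=
    (TensorProduct.congr (LinearEquiv.refl k (Module.Dual k M))
      (TensorProduct.dualDistribEquiv k B N)).injective
  exact (dualDistrib_inj k M (B ⊗[k] N)).comp h1

lemma bigE_assoc (u : Module.Dual k M ⊗[k] Module.Dual k B) (g : Module.Dual k N)
    (m : M) (b : B) (n : N) :
    bigE k ((TensorProduct.assoc k (Module.Dual k M) (Module.Dual k B)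
        (Module.Dual k N)) (u ⊗ₜ[k] g)) (m ⊗ₜ[k] (b ⊗ₜ[k] n))
      = TensorProduct.dualDistrib k M B u (m ⊗ₜ[k] b) * g n := by
  induction u with
  | zero => simp
  | tmul f β => simp [bigE, mul_assoc]
  | add u v hu hv =>
    simp only [add_tmul, map_add, LinearMap.add_apply, hu, hv, add_mul]

lemma cotL_apply (w : Module.Dual k M ⊗[k] Module.Dual k N) (m : M) (b : B) (n : N) :
    bigE k (cotensorMapL k (B := B) (M := M) (N := N) w) (m ⊗ₜ[k] (b ⊗ₜ[k] n))
      = TensorProduct.dualDistrib k M N w ((op b • m) ⊗ₜ[k] n) := by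
  induction w with
  | zero => simp [cotensorMapL]
  | tmul f g =>
    have : cotensorMapL k (B := B) (M := M) (N := N) (f ⊗ₜ[k] g)
        = (TensorProduct.assoc k _ _ _) ((coactR k (M := M) (B := B) f) ⊗ₜ[k] g) := by
      simp [cotensorMapL]
    rw [this, bigE_assoc, dualDistrib_coactR]
    simp
  | add u v hu hv => simp only [map_add, LinearMap.add_apply, hu, hv]

lemma cotR_apply (w : Module.Dual k M ⊗[k] Module.Dual k N) (m : M) (b : B) (n : N) :
    bigE k (cotensorMapR k (B := B) (M := M) (N := N) w) (m ⊗ₜ[k] (b ⊗ₜ[k] n))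
      = TensorProduct.dualDistrib k M N w (m ⊗ₜ[k] (b • n)) := by
  induction w with
  | zero => simp [cotensorMapR]
  | tmul f g =>
    have : cotensorMapR k (B := B) (M := M) (N := N) (f ⊗ₜ[k] g)
        = f ⊗ₜ[k] (coactL k (N := N) (B := B) g) := by
      simp [cotensorMapR]
    rw [this]
    simp only [bigE, LinearMap.comp_apply, TensorProduct.map_tmul, LinearMap.id_apply,
      TensorProduct.dualDistrib_apply, dualDistrib_coactL]
  | add u v hu hv => simp only [map_add, LinearMap.add_apply, hu, hv]

lemma mem_cotensor_iff (w : Module.Dual k M ⊗[k] Module.Dual k N) :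
    w ∈ cotensor k (B := B) (M := M) (N := N) ↔
      ∀ (b : B) (m : M) (n : N),
        TensorProduct.dualDistrib k M N w ((op b • m) ⊗ₜ[k] n)
          = TensorProduct.dualDistrib k M N w (m ⊗ₜ[k] (b • n)) := by
  constructor
  · intro hw b m n
    have h : cotensorMapL k (B := B) (M := M) (N := N) w
        = cotensorMapR k (B := B) (M := M) (N := N) w := hw
    rw [← cotL_apply, ← cotR_apply, h]
  · intro h
    have : bigE k (cotensorMapL k (B := B) (M := M) (N := N) w)
        = bigE k (cotensorMapR k (B := B) (M := M) (N := N) w) := by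
      apply LinearMap.ext
      intro x
      induction x with
      | zero => simp
      | tmul m t =>
        induction t with
        | zero => simp
        | tmul b n => rw [cotL_apply, cotR_apply, h]
        | add t₁ t₂ h₁ h₂ => rw [TensorProduct.tmul_add, map_add, map_add, h₁, h₂]
      | add x y hx hy => rw [map_add, map_add, hx, hy]
    exact LinearMap.mem_eqLocus.mpr (bigE_inj k this)

lemma vanish_of_mem_cotensor {w : Module.Dual k M ⊗[k] Module.Dual k N}
    (hw : w ∈ cotensor k (B := B) (M := M) (N := N)) :
    ∀ z ∈ midRel k (B := B) (M := M) (N := N),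
      TensorProduct.dualDistrib k M N w z = 0 := by
  intro z hz
  induction hz using Submodule.span_induction with
  | mem z hzz =>
    obtain ⟨b, m, n, rfl⟩ := hzz
    rw [map_sub, (mem_cotensor_iff k w).mp hw b m n, sub_self]
  | zero => simp
  | add x y _ _ hx hy => rw [map_add, hx, hy, add_zero]
  | smul c x _ hx => rw [map_smul, hx, smul_zero]

lemma mem_cotensor_of_vanish {w : Module.Dual k M ⊗[k] Module.Dual k N}
    (h : ∀ z ∈ midRel k (B := B) (M := M) (N := N),
      TensorProduct.dualDistrib k M N w z = 0) :
    w ∈ cotensor k (B := B) (M := M) (N := N) := by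
  rw [mem_cotensor_iff]
  intro b m n
  have hz : ((op b • m) ⊗ₜ[k] n - m ⊗ₜ[k] (b • n))
      ∈ midRel k (B := B) (M := M) (N := N) :=
    Submodule.subset_span ⟨b, m, n, rfl⟩
  have := h _ hz
  rw [map_sub, sub_eq_zero] at this
  exact this

lemma dualDistrib_map (f : M →ₗ[k] M) (g : N →ₗ[k] N)
    (u : Module.Dual k M ⊗[k] Module.Dual k N) (z : M ⊗[k] N) :
    TensorProduct.dualDistrib k M N (TensorProduct.map f.dualMap g.dualMap u) z
      = TensorProduct.dualDistrib k M N u (TensorProduct.map f g z) := by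
  induction u with
  | zero => simp
  | tmul φ ψ =>
    induction z with
    | zero => simp
    | tmul m n => simp
    | add x y hx hy => rw [map_add, map_add, map_add, hx, hy]
  | add u v hu hv => simp only [map_add, LinearMap.add_apply, hu, hv]

lemma midRel_stable (a : A) (c : C) {z : M ⊗[k] N}
    (hz : z ∈ midRel k (B := B) (M := M) (N := N)) :
    (TensorProduct.map (act k A M a) (act k Cᵐᵒᵖ N (op c))) z
      ∈ midRel k (B := B) (M := M) (N := N) := by
  induction hz using Submodule.span_induction with
  | mem z hzz =>
    obtain ⟨b, m, n, rfl⟩ := hzz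
    apply Submodule.subset_span
    refine ⟨b, a • m, op c • n, ?_⟩
    rw [map_sub, TensorProduct.map_tmul, TensorProduct.map_tmul]
    simp only [act_apply]
    rw [smul_comm a (op b) m, smul_comm b (op c) n]
  | zero => simp
  | add x y _ _ hx hy => rw [map_add]; exact Submodule.add_mem _ hx hy
  | smul r x _ hx => rw [map_smul]; exact Submodule.smul_mem _ r hx

/-- **Lemma 1.2 (iii).**  `M* ⊠_{B*} N* ≅ (M ⊗_B N)*` as `A*`-`C*`-bicomodules, via
`f ⊗ g ↦ f ⊗_{B*} g`. -/
theorem cotensor_dual_iso :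
    ∃ Φ : ↥(cotensor k (B := B) (M := M) (N := N)) ≃ₗ[k]
        Module.Dual k (tensorOver k (B := B) (M := M) (N := N)),
      -- elements of the cotensor product vanish on the balancing relations …
      (∀ w : cotensor k (B := B) (M := M) (N := N), ∀ z ∈ midRel k (B := B) (M := M) (N := N),
        TensorProduct.dualDistrib k M N w.1 z = 0) ∧
      -- … and `Φ` is the map `f ⊗ g ↦ f ⊗_{B*} g`:
      (∀ (w : cotensor k (B := B) (M := M) (N := N)) (z : M ⊗[k] N),
        Φ w (Submodule.Quotient.mk z) = TensorProduct.dualDistrib k M N w.1 z) ∧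
      -- `Φ` is a morphism of `A*`-`C*`-bicomodules (expressed by duality against the
      -- `A`- and `C`-actions):
      (∀ (a : A) (c : C) (w : cotensor k (B := B) (M := M) (N := N)),
        ∃ w' : cotensor k (B := B) (M := M) (N := N),
          w'.1 = (TensorProduct.map ((act k A M a).dualMap)
            ((act k Cᵐᵒᵖ N (op c)).dualMap)) w.1 ∧
          ∀ z : M ⊗[k] N,
            Φ w' (Submodule.Quotient.mk z)
              = Φ w (Submodule.Quotient.mk
                  ((TensorProduct.map (act k A M a) (act k Cᵐᵒᵖ N (op c))) z))) := by
  classical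
  have hvan : ∀ w : cotensor k (B := B) (M := M) (N := N),
      ∀ z ∈ midRel k (B := B) (M := M) (N := N),
        TensorProduct.dualDistrib k M N w.1 z = 0 :=
    fun w => vanish_of_mem_cotensor k w.2
  have hker : ∀ w : cotensor k (B := B) (M := M) (N := N),
      midRel k (B := B) (M := M) (N := N) ≤
        LinearMap.ker (TensorProduct.dualDistrib k M N w.1) :=
    fun w z hz => LinearMap.mem_ker.mpr (hvan w z hz)
  let Φ₀ : ↥(cotensor k (B := B) (M := M) (N := N)) →ₗ[k]
      Module.Dual k (tensorOver k (B := B) (M := M) (N := N)) :=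
    { toFun := fun w => (midRel k (B := B) (M := M) (N := N)).liftQ
        (TensorProduct.dualDistrib k M N w.1) (hker w)
      map_add' := by
        intro w w'
        apply LinearMap.ext
        intro x
        obtain ⟨z, rfl⟩ := Submodule.Quotient.mk_surjective _ x
        simp [Submodule.liftQ_apply]
        rfl
      map_smul' := by
        intro r w
        apply LinearMap.ext
        intro x
        obtain ⟨z, rfl⟩ := Submodule.Quotient.mk_surjective _ x
        show TensorProduct.dualDistrib k M N (↑(r • w)) z
            = r • TensorProduct.dualDistrib k M N (↑w) z
        rw [show ((r • w : ↥(cotensor k (B := B) (M := M) (N := N))) :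
            Module.Dual k M ⊗[k] Module.Dual k N)
          = r • (w : Module.Dual k M ⊗[k] Module.Dual k N) from rfl, map_smul]
        rfl }
  have hΦ₀ : ∀ (w : cotensor k (B := B) (M := M) (N := N)) (z : M ⊗[k] N),
      Φ₀ w (Submodule.Quotient.mk z) = TensorProduct.dualDistrib k M N w.1 z :=
    fun w z => Submodule.liftQ_apply _ _ z
  have hinj : Function.Injective Φ₀ := by
    intro w₁ w₂ hw
    have h1 : TensorProduct.dualDistrib k M N w₁.1 = TensorProduct.dualDistrib k M N w₂.1 := by
      apply LinearMap.ext
      intro z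
      rw [← hΦ₀ w₁ z, ← hΦ₀ w₂ z, hw]
    exact Subtype.ext (dualDistrib_inj k M N h1)
  have hsurj : Function.Surjective Φ₀ := by
    intro F
    set G : Module.Dual k (M ⊗[k] N) :=
      (F : ((M ⊗[k] N) ⧸ (midRel k (B := B) (M := M) (N := N))) →ₗ[k] k).comp
        (midRel k (B := B) (M := M) (N := N)).mkQ with hG
    set u := (TensorProduct.dualDistribEquiv k M N).symm G with huu
    have hDu : TensorProduct.dualDistrib k M N u = G := dualDistrib_symm_apply k M N G
    have hu : u ∈ cotensor k (B := B) (M := M) (N := N) := by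
      apply mem_cotensor_of_vanish
      intro z hz
      rw [hDu, hG]
      have hz0 : (Submodule.Quotient.mk z :
          (M ⊗[k] N) ⧸ (midRel k (B := B) (M := M) (N := N))) = 0 :=
        (Submodule.Quotient.mk_eq_zero _).mpr hz
      show F (Submodule.Quotient.mk z) = 0
      rw [congrArg F hz0]
      exact map_zero F
    refine ⟨⟨u, hu⟩, ?_⟩
    apply LinearMap.ext
    intro x
    obtain ⟨z, rfl⟩ := Submodule.Quotient.mk_surjective _ x
    rw [hΦ₀ ⟨u, hu⟩ z, hDu]
    rfl
  refine ⟨LinearEquiv.ofBijective Φ₀ ⟨hinj, hsurj⟩, hvan, ?_, ?_⟩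
  · intro w z
    exact hΦ₀ w z
  · intro a c w
    have hmem : (TensorProduct.map ((act k A M a).dualMap)
        ((act k Cᵐᵒᵖ N (op c)).dualMap)) w.1
        ∈ cotensor k (B := B) (M := M) (N := N) := by
      apply mem_cotensor_of_vanish
      intro z hz
      rw [dualDistrib_map]
      exact hvan w _ (midRel_stable k a c hz)
    refine ⟨⟨_, hmem⟩, rfl, ?_⟩
    intro z
    show Φ₀ ⟨_, hmem⟩ (Submodule.Quotient.mk z) = Φ₀ w (Submodule.Quotient.mk _)
    rw [hΦ₀, hΦ₀, dualDistrib_map]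

end LQTPaper
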